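/- arXiv:2307.10740 — 5 statements merged into one kernel-verified Lean document; each statement's English description precedes it below -/
import Mathlib

section
/- Let x₁, x₂, x₃ be pairwise distinct real numbers and y₁, y₂, y₃ be pairwise distinct real numbers. Let a, b, c, d be real numbers with ad − bc ≠ 0, let φ(t) = (a t + b)/(c t + d), and assume c yᵢ + d ≠ 0 and φ(yᵢ) = xᵢ for i = 1, 2, 3. Then the derivative of φ at y₁ equals φ′(y₁) = (x₁ − x₂)(x₁ − x₃)(y₂ − y₃) / ( (x₂ − x₃)(y₁ − y₂)(y₁ − y₃) ), and the analogous formulas hold at y₂ and y₃ with the indices cyclically permuted. -/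
lemma mob_sub (a b c d u v : ℝ) (hu : c * u + d ≠ 0) (hv : c * v + d ≠ 0) :
    (a * u + b) / (c * u + d) - (a * v + b) / (c * v + d)
      = (a * d - b * c) * (u - v) / ((c * u + d) * (c * v + d)) := by
  rw [div_sub_div _ _ hu hv]; congr 1; ring

lemma mobius_deriv (a b c d y : ℝ) (hd : c * y + d ≠ 0) :
    HasDerivAt (fun t : ℝ => (a * t + b) / (c * t + d))
      ((a * d - b * c) / (c * y + d) ^ 2) y := by
  have h1 : HasDerivAt (fun t : ℝ => a * t + b) a y := by
    simpa using ((hasDerivAt_id y).const_mul a).add_const b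
  have h2 : HasDerivAt (fun t : ℝ => c * t + d) c y := by
    simpa using ((hasDerivAt_id y).const_mul c).add_const d
  have : HasDerivAt (fun t : ℝ => (a * t + b) / (c * t + d)) _ y := h1.div h2 hd
  convert this using 1
  ring

/-- Derivative of the Möbius transformation sending `y₁, y₂, y₃` to `x₁, x₂, x₃`:
`φ′(y₁) = (x₁−x₂)(x₁−x₃)(y₂−y₃)/((x₂−x₃)(y₁−y₂)(y₁−y₃))`, and cyclic analogues. -/
theorem stmt_3 (x₁ x₂ x₃ y₁ y₂ y₃ a b c d : ℝ)
    (hx12 : x₁ ≠ x₂) (hx13 : x₁ ≠ x₃) (hx23 : x₂ ≠ x₃)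
    (hy12 : y₁ ≠ y₂) (hy13 : y₁ ≠ y₃) (hy23 : y₂ ≠ y₃)
    (hdet : a * d - b * c ≠ 0)
    (hd1 : c * y₁ + d ≠ 0) (hd2 : c * y₂ + d ≠ 0) (hd3 : c * y₃ + d ≠ 0)
    (hφ1 : (a * y₁ + b) / (c * y₁ + d) = x₁)
    (hφ2 : (a * y₂ + b) / (c * y₂ + d) = x₂)
    (hφ3 : (a * y₃ + b) / (c * y₃ + d) = x₃) :
    HasDerivAt (fun t : ℝ => (a * t + b) / (c * t + d))
      ((x₁ - x₂) * (x₁ - x₃) * (y₂ - y₃) / ((x₂ - x₃) * (y₁ - y₂) * (y₁ - y₃))) y₁ ∧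
    HasDerivAt (fun t : ℝ => (a * t + b) / (c * t + d))
      ((x₂ - x₃) * (x₂ - x₁) * (y₃ - y₁) / ((x₃ - x₁) * (y₂ - y₃) * (y₂ - y₁))) y₂ ∧
    HasDerivAt (fun t : ℝ => (a * t + b) / (c * t + d))
      ((x₃ - x₁) * (x₃ - x₂) * (y₁ - y₂) / ((x₁ - x₂) * (y₃ - y₁) * (y₃ - y₂))) y₃ := by
  subst hφ1 hφ2 hφ3
  have hx12' := sub_ne_zero.mpr hx12
  have hx13' := sub_ne_zero.mpr hx13
  have hx23' := sub_ne_zero.mpr hx23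
  have hy12' := sub_ne_zero.mpr hy12
  have hy13' := sub_ne_zero.mpr hy13
  have hy23' := sub_ne_zero.mpr hy23
  refine ⟨?_, ?_, ?_⟩
  · convert mobius_deriv a b c d y₁ hd1 using 1
    rw [div_eq_div_iff (mul_ne_zero (mul_ne_zero hx23' hy12') hy13') (pow_ne_zero 2 hd1)]
    rw [mob_sub a b c d y₁ y₂ hd1 hd2, mob_sub a b c d y₁ y₃ hd1 hd3, mob_sub a b c d y₂ y₃ hd2 hd3]
    field_simp
  · convert mobius_deriv a b c d y₂ hd2 using 1
    rw [div_eq_div_iff (mul_ne_zero (mul_ne_zero (sub_ne_zero.mpr hx13.symm)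
      hy23') (sub_ne_zero.mpr hy12.symm)) (pow_ne_zero 2 hd2)]
    rw [mob_sub a b c d y₂ y₃ hd2 hd3, mob_sub a b c d y₂ y₁ hd2 hd1, mob_sub a b c d y₃ y₁ hd3 hd1]
    field_simp
  · convert mobius_deriv a b c d y₃ hd3 using 1
    rw [div_eq_div_iff (mul_ne_zero (mul_ne_zero hx12'
      (sub_ne_zero.mpr hy13.symm)) (sub_ne_zero.mpr hy23.symm)) (pow_ne_zero 2 hd3)]
    rw [mob_sub a b c d y₃ y₁ hd3 hd1, mob_sub a b c d y₃ y₂ hd3 hd2, mob_sub a b c d y₁ y₂ hd1 hd2]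
    field_simp
end

section
/- Let x₁, x₂, x₃ be pairwise distinct real numbers, and let f be a real-valued function differentiable at x₁, x₂, x₃, whose values f(x₁), f(x₂), f(x₃) are pairwise distinct and whose derivatives f′(xᵢ) are strictly positive. Let a, b, c, d be real numbers with ad − bc > 0, set φ(t) = (a t + b)/(c t + d), and assume c·f(xᵢ) + d ≠ 0 and φ(f(xᵢ)) = xᵢ for i = 1, 2, 3. Let g = φ ∘ f. Then for all real exponents α₁, α₂, α₃ (with indices taken modulo 3, i.e. x₄ = x₁, x₅ = x₂, α₄ = α₁, α₅ = α₂): g′(x₁)^{α₁} · g′(x₂)^{α₂} · g′(x₃)^{α₃} = ∏_{i=1}^{3} [ f′(xᵢ) · f′(x_{i+1}) · (xᵢ − x_{i+1})² / (f(xᵢ) − f(x_{i+1}))² ]^{(αᵢ + α_{i+1} − α_{i+2})/2}, where all the bases of the real powers are strictly positive. -/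
private lemma rpow_tri (u v w : ℝ) (hu : 0 < u) (hv : 0 < v) (hw : 0 < w) (α₁ α₂ α₃ : ℝ) :
    u ^ α₁ * v ^ α₂ * w ^ α₃
      = (u * v) ^ ((α₁ + α₂ - α₃) / 2) * (v * w) ^ ((α₂ + α₃ - α₁) / 2) *
        (w * u) ^ ((α₃ + α₁ - α₂) / 2) := by
  rw [Real.mul_rpow hu.le hv.le, Real.mul_rpow hv.le hw.le, Real.mul_rpow hw.le hu.le]
  rw [show u ^ α₁ = u ^ ((α₁ + α₂ - α₃) / 2) * u ^ ((α₃ + α₁ - α₂) / 2) by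
        rw [← Real.rpow_add hu]; congr 1; ring,
      show v ^ α₂ = v ^ ((α₁ + α₂ - α₃) / 2) * v ^ ((α₂ + α₃ - α₁) / 2) by
        rw [← Real.rpow_add hv]; congr 1; ring,
      show w ^ α₃ = w ^ ((α₂ + α₃ - α₁) / 2) * w ^ ((α₃ + α₁ - α₂) / 2) by
        rw [← Real.rpow_add hw]; congr 1; ring]
  ring

/-- Trichordal restriction core identity: if `g = φ ∘ f` where `φ` is a Möbius map with
`ad − bc > 0` fixing the images `f(xᵢ)` back to `xᵢ`, then
`g′(x₁)^{α₁} g′(x₂)^{α₂} g′(x₃)^{α₃}` equals the explicit product of the three cross terms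
raised to the powers `(αᵢ + α_{i+1} − α_{i+2})/2`; all bases of the real powers are positive. -/
theorem stmt_5 (x₁ x₂ x₃ : ℝ) (f : ℝ → ℝ) (f'₁ f'₂ f'₃ : ℝ) (a b c d : ℝ) (α₁ α₂ α₃ : ℝ)
    (hx12 : x₁ ≠ x₂) (hx13 : x₁ ≠ x₃) (hx23 : x₂ ≠ x₃)
    (hdf1 : HasDerivAt f f'₁ x₁) (hdf2 : HasDerivAt f f'₂ x₂) (hdf3 : HasDerivAt f f'₃ x₃)
    (hv12 : f x₁ ≠ f x₂) (hv13 : f x₁ ≠ f x₃) (hv23 : f x₂ ≠ f x₃)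
    (hp1 : 0 < f'₁) (hp2 : 0 < f'₂) (hp3 : 0 < f'₃)
    (hdet : 0 < a * d - b * c)
    (hd1 : c * f x₁ + d ≠ 0) (hd2 : c * f x₂ + d ≠ 0) (hd3 : c * f x₃ + d ≠ 0)
    (hφ1 : (a * f x₁ + b) / (c * f x₁ + d) = x₁)
    (hφ2 : (a * f x₂ + b) / (c * f x₂ + d) = x₂)
    (hφ3 : (a * f x₃ + b) / (c * f x₃ + d) = x₃) :
    (0 < deriv (fun t : ℝ => (a * f t + b) / (c * f t + d)) x₁) ∧
    (0 < deriv (fun t : ℝ => (a * f t + b) / (c * f t + d)) x₂) ∧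
    (0 < deriv (fun t : ℝ => (a * f t + b) / (c * f t + d)) x₃) ∧
    (0 < f'₁ * f'₂ * (x₁ - x₂) ^ 2 / (f x₁ - f x₂) ^ 2) ∧
    (0 < f'₂ * f'₃ * (x₂ - x₃) ^ 2 / (f x₂ - f x₃) ^ 2) ∧
    (0 < f'₃ * f'₁ * (x₃ - x₁) ^ 2 / (f x₃ - f x₁) ^ 2) ∧
    deriv (fun t : ℝ => (a * f t + b) / (c * f t + d)) x₁ ^ α₁ *
        deriv (fun t : ℝ => (a * f t + b) / (c * f t + d)) x₂ ^ α₂ *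
        deriv (fun t : ℝ => (a * f t + b) / (c * f t + d)) x₃ ^ α₃
      = (f'₁ * f'₂ * (x₁ - x₂) ^ 2 / (f x₁ - f x₂) ^ 2) ^ ((α₁ + α₂ - α₃) / 2) *
        (f'₂ * f'₃ * (x₂ - x₃) ^ 2 / (f x₂ - f x₃) ^ 2) ^ ((α₂ + α₃ - α₁) / 2) *
        (f'₃ * f'₁ * (x₃ - x₁) ^ 2 / (f x₃ - f x₁) ^ 2) ^ ((α₃ + α₁ - α₂) / 2) := by
  -- derivative of g at each point
  have hder : ∀ (x : ℝ) (f' : ℝ), HasDerivAt f f' x → c * f x + d ≠ 0 →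
      deriv (fun t : ℝ => (a * f t + b) / (c * f t + d)) x
        = f' * (a * d - b * c) / (c * f x + d) ^ 2 := by
    intro x f' hdf hd
    have h1 : HasDerivAt (fun t => a * f t + b) (a * f') x := by
      simpa using ((hdf.const_mul a).add_const b)
    have h2 : HasDerivAt (fun t => c * f t + d) (c * f') x := by
      simpa using ((hdf.const_mul c).add_const d)
    have h := h1.div h2 hd
    rw [show (fun t : ℝ => (a * f t + b) / (c * f t + d)) = ((fun t => a * f t + b) / fun t => c * f t + d) from rfl, h.deriv]
    field_simp
    ring
  have hD1 := hder x₁ f'₁ hdf1 hd1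
  have hD2 := hder x₂ f'₂ hdf2 hd2
  have hD3 := hder x₃ f'₃ hdf3 hd3
  set g₁ := deriv (fun t : ℝ => (a * f t + b) / (c * f t + d)) x₁ with hg₁
  set g₂ := deriv (fun t : ℝ => (a * f t + b) / (c * f t + d)) x₂ with hg₂
  set g₃ := deriv (fun t : ℝ => (a * f t + b) / (c * f t + d)) x₃ with hg₃
  have hgp1 : 0 < g₁ := by
    rw [hD1]; positivity
  have hgp2 : 0 < g₂ := by
    rw [hD2]; positivity
  have hgp3 : 0 < g₃ := by
    rw [hD3]; positivity
  -- difference identity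
  have hdiff : ∀ (u v X Y : ℝ), (a * u + b) / (c * u + d) = X →
      (a * v + b) / (c * v + d) = Y → c * u + d ≠ 0 → c * v + d ≠ 0 →
      X - Y = (a * d - b * c) * (u - v) / ((c * u + d) * (c * v + d)) := by
    intro u v X Y hx hy hdx hdy
    rw [← hx, ← hy]
    rw [div_sub_div _ _ hdx hdy]; congr 1
    ring
  have h12 := hdiff (f x₁) (f x₂) x₁ x₂ hφ1 hφ2 hd1 hd2
  have h23 := hdiff (f x₂) (f x₃) x₂ x₃ hφ2 hφ3 hd2 hd3
  have h31 := hdiff (f x₃) (f x₁) x₃ x₁ hφ3 hφ1 hd3 hd1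
  have hv12' : f x₁ - f x₂ ≠ 0 := sub_ne_zero.mpr hv12
  have hv23' : f x₂ - f x₃ ≠ 0 := sub_ne_zero.mpr hv23
  have hv31' : f x₃ - f x₁ ≠ 0 := sub_ne_zero.mpr (Ne.symm hv13)
  -- cross terms equal products of derivatives
  have key12 : f'₁ * f'₂ * (x₁ - x₂) ^ 2 / (f x₁ - f x₂) ^ 2 = g₁ * g₂ := by
    rw [hD1, hD2, h12]; field_simp
  have key23 : f'₂ * f'₃ * (x₂ - x₃) ^ 2 / (f x₂ - f x₃) ^ 2 = g₂ * g₃ := by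
    rw [hD2, hD3, h23]; field_simp
  have key31 : f'₃ * f'₁ * (x₃ - x₁) ^ 2 / (f x₃ - f x₁) ^ 2 = g₃ * g₁ := by
    rw [hD3, hD1, h31]; field_simp
  refine ⟨hgp1, hgp2, hgp3, ?_, ?_, ?_, ?_⟩
  · rw [key12]; exact mul_pos hgp1 hgp2
  · rw [key23]; exact mul_pos hgp2 hgp3
  · rw [key31]; exact mul_pos hgp3 hgp1
  · rw [key12, key23, key31]
    exact rpow_tri g₁ g₂ g₃ hgp1 hgp2 hgp3 α₁ α₂ α₃
end

section
/- Define G(u,v) = (1/(2π)) · log( |u − conj(v)| / |u − v| ) for distinct points u, v of the upper half-plane ℍ. For every η ∈ (0,1) there exist ν > 0 and C₀ > 0 such that the following holds: for all distinct z₁, z₂ ∈ ℍ, all r₁, r₂ ∈ (0, 1 − η) satisfying r₁·Im(z₁) ≤ ν·|z₁ − z₂| and r₂·Im(z₂) ≤ ν·|z₁ − z₂|, and all z₃ ∈ U(z₁, r₁) and z₄ ∈ U(z₂, r₂) with z₃ ≠ z₄, one has G(z₃, z₄) ≤ C₀ · (1 + G(z₁, z₂)). -/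
/-- abs (z - conj z) = 2 * z.im for z in upper half plane -/
lemma abs_sub_conj_self (z : ℂ) (hz : 0 < z.im) :
    ‖z - (starRingEnd ℂ) z‖ = 2 * z.im := by
  rw [Complex.sub_conj]
  simp [abs_of_pos hz]

lemma abs_le_abs_sub_conj {u v : ℂ} (hu : 0 < u.im) (hv : 0 < v.im) :
    ‖u - v‖ ≤ ‖u - (starRingEnd ℂ) v‖ := by
  rw [Complex.norm_def, Complex.norm_def]
  apply Real.sqrt_le_sqrt
  simp only [Complex.normSq_apply, Complex.sub_re, Complex.sub_im,
    Complex.conj_re, Complex.conj_im, sub_neg_eq_add]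
  nlinarith [mul_pos hu hv]

lemma im_le_abs_sub_conj {u v : ℂ} (hu : 0 < u.im) (hv : 0 < v.im) :
    v.im ≤ ‖u - (starRingEnd ℂ) v‖ := by
  have h1 : (u - (starRingEnd ℂ) v).im ≤ |(u - (starRingEnd ℂ) v).im| := le_abs_self _
  have h2 := Complex.abs_im_le_norm (u - (starRingEnd ℂ) v)
  have h3 : (u - (starRingEnd ℂ) v).im = u.im + v.im := by
    simp [Complex.sub_im, Complex.conj_im]
  linarith

/-- Two-point Green's function comparison: for `η ∈ (0,1)` there exist `ν, C₀ > 0` such that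
for all distinct `z₁, z₂ ∈ ℍ`, radii `r₁, r₂ ∈ (0, 1−η)` with `rⱼ·Im zⱼ ≤ ν|z₁ − z₂|`, and all
distinct `z₃ ∈ U(z₁,r₁)`, `z₄ ∈ U(z₂,r₂)`, one has `G(z₃,z₄) ≤ C₀(1 + G(z₁,z₂))`, where
`G(u,v) = (1/2π) log(|u − conj v|/|u − v|)`. -/
theorem stmt_7 (η : ℝ) (hη : η ∈ Set.Ioo (0 : ℝ) 1) :
    ∃ ν > (0 : ℝ), ∃ C₀ > (0 : ℝ), ∀ z₁ z₂ : ℂ, 0 < z₁.im → 0 < z₂.im → z₁ ≠ z₂ →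
      ∀ r₁ r₂ : ℝ, r₁ ∈ Set.Ioo 0 (1 - η) → r₂ ∈ Set.Ioo 0 (1 - η) →
        r₁ * z₁.im ≤ ν * ‖z₁ - z₂‖ →
        r₂ * z₂.im ≤ ν * ‖z₁ - z₂‖ →
        ∀ z₃ z₄ : ℂ, 0 < z₃.im →
          ‖z₃ - z₁‖ ≤ r₁ * ‖z₃ - (starRingEnd ℂ) z₁‖ →
          0 < z₄.im →
          ‖z₄ - z₂‖ ≤ r₂ * ‖z₄ - (starRingEnd ℂ) z₂‖ →
          z₃ ≠ z₄ →
          (1 / (2 * Real.pi)) *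
              Real.log (‖z₃ - (starRingEnd ℂ) z₄‖ / ‖z₃ - z₄‖)
            ≤ C₀ * (1 + (1 / (2 * Real.pi)) *
              Real.log (‖z₁ - (starRingEnd ℂ) z₂‖ / ‖z₁ - z₂‖)) := by
  obtain ⟨hη0, hη1⟩ := hη
  refine ⟨η / 8, by linarith, 1, one_pos, ?_⟩
  intro z₁ z₂ h1 h2 hne r₁ r₂ hr₁ hr₂ hν₁ hν₂ z₃ z₄ h3 hU₃ h4 hU₄ hne34
  set A := ‖z₁ - z₂‖ with hAdef
  set D := ‖z₃ - z₄‖ with hDdef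
  set N := ‖z₃ - (starRingEnd ℂ) z₄‖ with hNdef
  set B := ‖z₁ - (starRingEnd ℂ) z₂‖ with hBdef
  have hA : 0 < A := by
    rw [hAdef]; simpa [sub_eq_zero] using hne
  have hD : 0 < D := by
    rw [hDdef]; simpa [sub_eq_zero] using hne34
  -- step 1: |z₃ - z₁| ≤ A/4
  have key : ∀ z w : ℂ, 0 < w.im → ∀ r : ℝ, r ∈ Set.Ioo 0 (1 - η) →
      r * w.im ≤ η / 8 * A → ‖z - w‖ ≤ r * ‖z - (starRingEnd ℂ) w‖ →
      ‖z - w‖ ≤ A / 4 := by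
    intro z w hw r hr hν hU
    have htri : ‖z - (starRingEnd ℂ) w‖
        ≤ ‖z - w‖ + ‖w - (starRingEnd ℂ) w‖ := norm_sub_le_norm_sub_add_norm_sub _ _ _
    rw [abs_sub_conj_self w hw] at htri
    have hx : (0:ℝ) ≤ ‖z - w‖ := norm_nonneg _
    obtain ⟨hr0, hr1⟩ := hr
    nlinarith [mul_le_mul_of_nonneg_left htri hr0.le]
  have e₃ : ‖z₃ - z₁‖ ≤ A / 4 := key z₃ z₁ h1 r₁ hr₁ hν₁ hU₃
  have e₄ : ‖z₄ - z₂‖ ≤ A / 4 := key z₄ z₂ h2 r₂ hr₂ hν₂ hU₄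
  -- step 2: A ≤ 2 D
  have htriA : A ≤ ‖z₁ - z₃‖ + ‖z₃ - z₄‖ + ‖z₄ - z₂‖ := by
    calc A ≤ ‖z₁ - z₄‖ + ‖z₄ - z₂‖ := norm_sub_le_norm_sub_add_norm_sub _ _ _
    _ ≤ ‖z₁ - z₃‖ + ‖z₃ - z₄‖ + ‖z₄ - z₂‖ := by
        have := norm_sub_le_norm_sub_add_norm_sub z₁ z₃ z₄
        linarith
  rw [show ‖z₁ - z₃‖ = ‖z₃ - z₁‖ from norm_sub_rev _ _] at htriA
  have hAD : A ≤ 2 * D := by linarith [htriA]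
  -- step 3: N ≤ D + 2 z₄.im
  have hN : N ≤ D + 2 * z₄.im := by
    have := norm_sub_le_norm_sub_add_norm_sub z₃ z₄ ((starRingEnd ℂ) z₄)
    rw [abs_sub_conj_self z₄ h4] at this
    exact this
  -- step 4: z₄.im ≤ z₂.im + A/4
  have h4le : z₄.im ≤ z₂.im + A / 4 := by
    have h := Complex.abs_im_le_norm (z₄ - z₂)
    have : (z₄ - z₂).im ≤ ‖z₄ - z₂‖ := le_trans (le_abs_self _) h
    rw [Complex.sub_im] at this
    linarith
  -- step 5: B bounds
  have hAB : A ≤ B := abs_le_abs_sub_conj h1 h2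
  have hB2 : z₂.im ≤ B := im_le_abs_sub_conj h1 h2
  have hB : 0 < B := lt_of_lt_of_le hA hAB
  -- key multiplicative inequality: N * A ≤ 6 * B * D
  have hNA : N * A ≤ 6 * (B * D) := by
    nlinarith [mul_le_mul_of_nonneg_right hAB hD.le,
      mul_le_mul_of_nonneg_right hN hA.le, norm_nonneg (z₃ - (starRingEnd ℂ) z₄),
      mul_le_mul_of_nonneg_left hAD h2.le, 
      mul_le_mul hB2 hAD (by linarith) hB.le]
  have hSpos : 0 < N / D := by
    apply div_pos _ hD
    have := im_le_abs_sub_conj h3 h4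
    linarith
  have hTpos : 0 < B / A := div_pos hB hA
  have hT1 : (1:ℝ) ≤ B / A := (one_le_div hA).mpr hAB
  have hS6T : N / D ≤ 6 * (B / A) := by
    rw [div_le_iff₀ hD, show 6 * (B / A) * D = 6 * (B * D) / A by ring, le_div_iff₀ hA]
    exact hNA
  have hlog : Real.log (N / D) ≤ Real.log 6 + Real.log (B / A) := by
    calc Real.log (N / D) ≤ Real.log (6 * (B / A)) := Real.log_le_log hSpos hS6T
    _ = Real.log 6 + Real.log (B / A) := Real.log_mul (by norm_num) hTpos.ne'
  have hlogT : 0 ≤ Real.log (B / A) := Real.log_nonneg hT1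
  have hlog6 : Real.log 6 ≤ 2 * Real.pi := by
    have h6 : Real.log 6 ≤ 2 := by
      rw [Real.log_le_iff_le_exp (by norm_num)]
      have := Real.exp_one_gt_d9
      have h2 : Real.exp 2 = Real.exp 1 * Real.exp 1 := by
        rw [← Real.exp_add]; norm_num
      nlinarith
    have := Real.pi_gt_three
    linarith
  have hπ : (0:ℝ) < 2 * Real.pi := by positivity
  rw [one_mul]
  have hfinal : Real.log (N / D) ≤ 2 * Real.pi + Real.log (B / A) := by linarith
  calc (1 / (2 * Real.pi)) * Real.log (N / D)
      ≤ (1 / (2 * Real.pi)) * (2 * Real.pi + Real.log (B / A)) := by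
        apply mul_le_mul_of_nonneg_left hfinal (by positivity)
    _ = 1 + (1 / (2 * Real.pi)) * Real.log (B / A) := by
        field_simp
end

section
/- Let φ be a complex-valued function holomorphic on a neighborhood of a point c ∈ ℂ with φ′(c) ≠ 0. Then there exist ε₀ > 0 and C > 0 such that for every ε ∈ (0, ε₀]: the open disk of radius |φ′(c)|·ε − C·ε² centered at φ(c) is contained in the image φ(D(c,ε)) of the open disk D(c,ε) of radius ε centered at c, and φ(D(c,ε)) is contained in the open disk of radius |φ′(c)|·ε + C·ε² centered at φ(c). -/
open Topology Metric Set NNReal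

lemma mvt_c {f g : ℂ → ℂ} {s : Set ℂ} (hs : Convex ℝ s) {C : ℝ}
    (hf : ∀ z ∈ s, HasDerivAt f (g z) z) (hb : ∀ z ∈ s, ‖g z‖ ≤ C)
    {x y : ℂ} (hx : x ∈ s) (hy : y ∈ s) : ‖f y - f x‖ ≤ C * ‖y - x‖ :=
  hs.norm_image_sub_le_of_norm_hasFDerivWithin_le
    (f' := fun z => (1 : ℂ →L[ℂ] ℂ).smulRight (g z))
    (fun z hz => ((hf z hz).hasFDerivAt).hasFDerivWithinAt)
    (fun z hz => by
      rw [ContinuousLinearMap.norm_smulRight_apply, norm_one, one_mul]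
      exact hb z hz) hx hy

/-- Disk-distortion estimate: if `φ` is holomorphic on a neighborhood of `c` with
`φ′(c) ≠ 0`, then there are `ε₀, C > 0` such that for all `ε ∈ (0, ε₀]`,
`D(φ(c), |φ′(c)|ε − Cε²) ⊆ φ(D(c,ε)) ⊆ D(φ(c), |φ′(c)|ε + Cε²)`. -/
theorem stmt_13 (φ : ℂ → ℂ) (c : ℂ) (U : Set ℂ) (hU : U ∈ 𝓝 c)
    (hφ : DifferentiableOn ℂ φ U) (hd : deriv φ c ≠ 0) :
    ∃ ε₀ > (0 : ℝ), ∃ C > (0 : ℝ), ∀ ε : ℝ, 0 < ε → ε ≤ ε₀ →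
      Metric.ball (φ c) (‖deriv φ c‖ * ε - C * ε ^ 2) ⊆ φ '' Metric.ball c ε ∧
      φ '' Metric.ball c ε ⊆ Metric.ball (φ c) (‖deriv φ c‖ * ε + C * ε ^ 2) := by
  set a : ℂ := deriv φ c with ha_def
  have ha : (0 : ℝ) < ‖a‖ := norm_pos_iff.mpr hd
  -- find a ball inside U
  obtain ⟨r, hr, hrU⟩ : ∃ r > 0, ball c r ⊆ U := Metric.mem_nhds_iff.mp hU
  have hφr : DifferentiableOn ℂ φ (ball c r) := hφ.mono hrU
  have hAn : AnalyticOnNhd ℂ φ (ball c r) := hφr.analyticOnNhd isOpen_ball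
  have hAn' : AnalyticOnNhd ℂ (deriv φ) (ball c r) := hAn.deriv
  have hAn'' : AnalyticOnNhd ℂ (deriv (deriv φ)) (ball c r) := hAn'.deriv
  -- derivative facts at points of the ball
  have hDφ : ∀ z ∈ ball c r, HasDerivAt φ (deriv φ z) z := fun z hz =>
    (hφr.differentiableAt (isOpen_ball.mem_nhds hz)).hasDerivAt
  have hDφ' : ∀ z ∈ ball c r, HasDerivAt (deriv φ) (deriv (deriv φ) z) z := fun z hz =>
    ((hAn'.differentiableOn).differentiableAt (isOpen_ball.mem_nhds hz)).hasDerivAt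
  -- bound the second derivative on the closed ball of radius r/2
  obtain ⟨K₀, hK₀⟩ : ∃ K₀, ∀ z ∈ closedBall c (r / 2), ‖deriv (deriv φ) z‖ ≤ K₀ :=
    (isCompact_closedBall c (r / 2)).exists_bound_of_continuousOn
      ((hAn''.continuousOn).mono (closedBall_subset_ball (by linarith)))
  set K : ℝ := max K₀ 1 with hK_def
  have hK1 : (1 : ℝ) ≤ K := le_max_right _ _
  have hK : (0 : ℝ) < K := by linarith
  have hKb : ∀ z ∈ closedBall c (r / 2), ‖deriv (deriv φ) z‖ ≤ K := fun z hz =>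
    (hK₀ z hz).trans (le_max_left _ _)
  have hsub : closedBall c (r / 2) ⊆ ball c r := closedBall_subset_ball (by linarith)
  -- Lipschitz bound on deriv φ
  have L1 : ∀ z ∈ closedBall c (r / 2), ‖deriv φ z - a‖ ≤ K * ‖z - c‖ := by
    intro z hz
    exact mvt_c (convex_closedBall c (r / 2))
      (fun ζ hζ => hDφ' ζ (hsub hζ)) hKb
      (mem_closedBall_self (by linarith)) hz
  -- Taylor estimate
  have L2 : ∀ z ∈ closedBall c (r / 2), ‖φ z - φ c - a * (z - c)‖ ≤ K * ‖z - c‖ ^ 2 := by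
    intro z hz
    have hcz : closedBall c ‖z - c‖ ⊆ closedBall c (r / 2) := by
      apply closedBall_subset_closedBall
      simpa [dist_eq_norm] using hz
    have key : ‖(φ z - a * z) - (φ c - a * c)‖ ≤ (K * ‖z - c‖) * ‖z - c‖ := by
      refine mvt_c (convex_closedBall c ‖z - c‖) (g := fun ζ => deriv φ ζ - a)
        (fun ζ hζ => ((hDφ ζ (hsub (hcz hζ))).sub
          (((hasDerivAt_id ζ).const_mul a).congr_deriv (mul_one a))) )
        (fun ζ hζ => (L1 ζ (hcz hζ)).trans (by
          have : ‖ζ - c‖ ≤ ‖z - c‖ := by simpa [dist_eq_norm] using hζ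
          nlinarith))
        (mem_closedBall_self (norm_nonneg _)) ?_
      simp [mem_closedBall, dist_eq_norm]
    calc ‖φ z - φ c - a * (z - c)‖ = ‖(φ z - a * z) - (φ c - a * c)‖ := by ring_nf
      _ ≤ (K * ‖z - c‖) * ‖z - c‖ := key
      _ = K * ‖z - c‖ ^ 2 := by ring
  -- choose constants
  refine ⟨min (r / 4) (‖a‖ / (4 * K)), by positivity, 2 * K, by positivity, ?_⟩
  intro ε hε0 hε
  have hεr : ε ≤ r / 4 := hε.trans (min_le_left _ _)
  have hεa : K * ε ≤ ‖a‖ / 4 := by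
    have := hε.trans (min_le_right _ _)
    rw [le_div_iff₀ (by positivity)] at this
    linarith
  have hεball : closedBall c ε ⊆ closedBall c (r / 2) :=
    closedBall_subset_closedBall (by linarith)
  have habs : ‖a‖ = ‖a‖ := rfl
  constructor
  · -- lower inclusion
    intro w hw
    rw [mem_ball, dist_eq_norm] at hw
    set ρ : ℝ := ε - K * ε ^ 2 / ‖a‖ with hρ_def
    have hρpos : 0 < ρ := by
      have : K * ε ^ 2 / ‖a‖ ≤ ε / 4 := by
        rw [div_le_div_iff₀ ha (by norm_num)]
        nlinarith
      simp only [hρ_def]; linarith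
    have hρε : ρ < ε := by
      have : 0 < K * ε ^ 2 / ‖a‖ := by positivity
      simp only [hρ_def]; linarith
    set g : ℂ → ℂ := fun z => z - (φ z - w) / a with hg_def
    -- key identity
    have gid : ∀ z, g z - c = (w - φ c - (φ z - φ c - a * (z - c))) / a := by
      intro z; simp only [hg_def]; field_simp; ring
    have hmaps : MapsTo g (closedBall c ρ) (closedBall c ρ) := by
      intro z hz
      have hzε : z ∈ closedBall c ε :=
        closedBall_subset_closedBall hρε.le hz
      have hzc : ‖z - c‖ ≤ ε := by simpa [dist_eq_norm] using hzε
      have hT := L2 z (hεball hzε)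
      rw [mem_closedBall, dist_eq_norm, gid z, norm_div]
      rw [div_le_iff₀ ha]
      have h1 : ‖w - φ c - (φ z - φ c - a * (z - c))‖ ≤
          ‖w - φ c‖ + ‖φ z - φ c - a * (z - c)‖ := norm_sub_le _ _
      have h2 : K * ‖z - c‖ ^ 2 ≤ K * ε ^ 2 := by
        nlinarith [mul_self_le_mul_self (norm_nonneg (z - c)) hzc]
      have h3 : ρ * ‖a‖ = ε * ‖a‖ - K * ε ^ 2 := by
        rw [hρ_def, sub_mul, div_mul_cancel₀ _ ha.ne']
      have hw' : ‖w - φ c‖ < ‖a‖ * ε - 2 * K * ε ^ 2 := hw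
      linarith
    -- contraction
    have hlip : LipschitzOnWith (1 / 2 : ℝ≥0) g (closedBall c ρ) := by
      apply LipschitzOnWith.of_dist_le_mul
      intro z hz z' hz'
      have hzε : z ∈ closedBall c ε := closedBall_subset_closedBall hρε.le hz
      have hz'ε : z' ∈ closedBall c ε := closedBall_subset_closedBall hρε.le hz'
      have key : ‖(φ z' - a * z') - (φ z - a * z)‖ ≤ (K * ε) * ‖z' - z‖ := by
        refine mvt_c (convex_closedBall c ε) (g := fun ζ => deriv φ ζ - a)
          (fun ζ hζ => ((hDφ ζ (hsub (hεball hζ))).sub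
            (((hasDerivAt_id ζ).const_mul a).congr_deriv (mul_one a))))
          (fun ζ hζ => (L1 ζ (hεball hζ)).trans (by
            have : ‖ζ - c‖ ≤ ε := by simpa [dist_eq_norm] using hζ
            nlinarith)) hzε hz'ε
      have gdiff : g z - g z' = ((φ z' - a * z') - (φ z - a * z)) / a := by
        simp only [hg_def]; field_simp; ring
      rw [dist_eq_norm, dist_eq_norm, gdiff, norm_div, div_le_iff₀ ha]
      have hn : ‖z' - z‖ = ‖z - z'‖ := norm_sub_rev _ _
      have hc2 : ((1 / 2 : ℝ≥0) : ℝ) = 1 / 2 := by norm_num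
      rw [hc2]
      have h4 : K * ε * ‖z - z'‖ ≤ ‖a‖ / 4 * ‖z - z'‖ :=
        mul_le_mul_of_nonneg_right hεa (norm_nonneg _)
      have h5 : 0 ≤ ‖a‖ * ‖z - z'‖ := mul_nonneg ha.le (norm_nonneg _)
      nlinarith [key]
    have hcontr : ContractingWith (1 / 2 : ℝ≥0) (hmaps.restrict g _ _) :=
      ⟨by rw [← NNReal.coe_lt_coe]; norm_num, hlip.mapsToRestrict hmaps⟩
    obtain ⟨y, hy_mem, hy_fix, -⟩ :=
      hcontr.exists_fixedPoint' (isClosed_closedBall.isComplete) hmaps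
        (mem_closedBall_self hρpos.le) (edist_ne_top _ _)
    have hφy : φ y = w := by
      have h : y - (φ y - w) / a = y := hy_fix
      have h0 : (φ y - w) / a = 0 := sub_eq_self.mp h
      rcases div_eq_zero_iff.mp h0 with h | h
      · exact sub_eq_zero.mp h
      · exact absurd h hd
    exact ⟨y, by
      have : y ∈ closedBall c ρ := hy_mem
      rw [mem_closedBall] at this
      exact mem_ball.mpr (lt_of_le_of_lt this hρε), hφy⟩
  · -- upper inclusion
    rintro _ ⟨z, hz, rfl⟩
    rw [mem_ball, dist_eq_norm] at hz ⊢
    have hzε : z ∈ closedBall c ε := ball_subset_closedBall (by rw [mem_ball, dist_eq_norm]; exact hz)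
    have hT := L2 z (hεball hzε)
    have hzc : ‖z - c‖ < ε := by simpa [dist_eq_norm] using hz
    have h1 : ‖φ z - φ c‖ ≤ ‖a * (z - c)‖ + ‖φ z - φ c - a * (z - c)‖ := by
      calc ‖φ z - φ c‖ = ‖a * (z - c) + (φ z - φ c - a * (z - c))‖ := by ring_nf
        _ ≤ _ := norm_add_le _ _
    rw [norm_mul] at h1
    have A : ‖a‖ * ‖z - c‖ < ‖a‖ * ε := mul_lt_mul_of_pos_left hzc ha
    have B : K * ‖z - c‖ ^ 2 ≤ K * ε ^ 2 := by
      nlinarith [mul_self_le_mul_self (norm_nonneg (z - c)) hzc.le]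
    have Cc : 0 < K * ε ^ 2 := by positivity
    linarith
end

section
/- Let x, y be real numbers with 0 < x ≤ y < 1, x ≤ 1/4 and 1 − y ≤ 1/4 (so that y − x ≥ 1/2), and define f(t) = (1 − x)·t / ( (1 − 2x)·t + x ) for t ∈ [0,1]. Then: (i) the denominator (1 − 2x)t + x is strictly positive for all t ∈ [0,1], f(0) = 0, f(1) = 1, f(x) = 1/2, and f is strictly increasing on [0,1]; (ii) 1 − f(y) = x(1 − y) / ( y − x + 2x(1 − y) ) ≤ 2·x·(1 − y); and (iii) for all a ∈ [0, x] and b ∈ [y, 1], f(b) − f(a) ≥ 3/8, and in particular f(b) − f(a) ≥ (3/8)(b − a). -/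
/-- Explicit estimates for the Möbius map `f(t) = (1 − x)t/((1 − 2x)t + x)` fixing `0, 1`
and sending `x` to `1/2`, when `0 < x ≤ y < 1`, `x ≤ 1/4` and `1 − y ≤ 1/4`:
(i) positivity of the denominator on `[0,1]`, the special values, strict monotonicity;
(ii) `1 − f(y) = x(1 − y)/(y − x + 2x(1 − y)) ≤ 2x(1 − y)`;
(iii) `f(b) − f(a) ≥ 3/8 ≥ (3/8)(b − a)` for `a ∈ [0,x]`, `b ∈ [y,1]`. -/
theorem stmt_14 (x y : ℝ) (hx : 0 < x) (hxy : x ≤ y) (hy : y < 1)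
    (hx4 : x ≤ 1 / 4) (hy4 : 1 - y ≤ 1 / 4)
    (f : ℝ → ℝ) (hf : ∀ t, f t = (1 - x) * t / ((1 - 2 * x) * t + x)) :
    ((∀ t ∈ Set.Icc (0 : ℝ) 1, 0 < (1 - 2 * x) * t + x) ∧
      f 0 = 0 ∧ f 1 = 1 ∧ f x = 1 / 2 ∧ StrictMonoOn f (Set.Icc 0 1)) ∧
    (1 - f y = x * (1 - y) / (y - x + 2 * x * (1 - y)) ∧ 1 - f y ≤ 2 * x * (1 - y)) ∧
    (∀ a ∈ Set.Icc 0 x, ∀ b ∈ Set.Icc y 1,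
      3 / 8 ≤ f b - f a ∧ 3 / 8 * (b - a) ≤ f b - f a) := by
  have hden : ∀ t ∈ Set.Icc (0 : ℝ) 1, 0 < (1 - 2 * x) * t + x := by
    intro t ht
    obtain ⟨h0, h1⟩ := ht
    nlinarith
  have hy34 : (3 : ℝ) / 4 ≤ y := by linarith
  have hxlt1 : x < 1 := by linarith
  refine ⟨⟨hden, ?_, ?_, ?_, ?_⟩, ⟨?_, ?_⟩, ?_⟩
  · rw [hf]; simp
  · rw [hf, show ((1:ℝ) - 2 * x) * 1 + x = 1 - x by ring, mul_one,
      div_self (by linarith : (1:ℝ) - x ≠ 0)]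
  · rw [hf]; rw [div_eq_iff (by nlinarith)]; ring
  · intro s hs t ht hst
    rw [hf, hf, div_lt_div_iff₀ (hden s hs) (hden t ht)]
    obtain ⟨hs0, hs1⟩ := hs
    nlinarith [mul_pos hx (sub_pos.mpr hst)]
  · have hd : (0:ℝ) < (1 - 2 * x) * y + x := hden y ⟨by linarith, le_of_lt hy⟩
    rw [hf]
    rw [eq_div_iff (by nlinarith : y - x + 2 * x * (1 - y) ≠ 0)]
    rw [one_sub_div (ne_of_gt hd), div_mul_eq_mul_div, div_eq_iff (ne_of_gt hd)]
    ring
  · have hd : (0:ℝ) < (1 - 2 * x) * y + x := hden y ⟨by linarith, le_of_lt hy⟩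
    rw [hf]
    rw [sub_div' (ne_of_gt hd), div_le_iff₀ hd]
    nlinarith [mul_pos hx (sub_pos.mpr hy)]
  · intro a ha b hb
    obtain ⟨ha0, hax⟩ := ha
    obtain ⟨hby, hb1⟩ := hb
    have hda : (0:ℝ) < (1 - 2 * x) * a + x := hden a ⟨ha0, by linarith⟩
    have hdb : (0:ℝ) < (1 - 2 * x) * b + x := hden b ⟨by linarith, hb1⟩
    have hfa : f a ≤ 1 / 2 := by
      rw [hf, div_le_iff₀ hda]; nlinarith
    have hfb : 7 / 8 ≤ f b := by
      rw [hf, le_div_iff₀ hdb]; nlinarith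
    have h1 : 3 / 8 ≤ f b - f a := by linarith
    exact ⟨h1, by nlinarith⟩
end
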